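/- For all real numbers a > 0 and b > 0, 1-WL-E fails to distinguish the six-point configurations X_L(a,b) = ((0,0,b), (0,0,−b), (a,a,a), (a,a,−a), (−a,−a,a), (−a,−a,−a)) and X_R(a,b) = ((0,0,b), (0,0,−b), (a,a,a), (−a,a,a), (a,−a,−a), (−a,−a,−a)): for every iteration t there is a bijection π : Fin 6 → Fin 6 matching nodes of X_L to nodes of X_R with equal 1-WL-E colors. (This gives a continuous family of counterexamples to the completeness of Vanilla DisGNN, obtained from a cube combined with a regular octahedron of arbitrary relative size.) -/

import Mathlib

noncomputable section OneWLE

/-- The position of a node of the disjoint union of the two configurations. -/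
def WLpos {n m : ℕ} (x : Fin n → EuclideanSpace ℝ (Fin 3))
    (y : Fin m → EuclideanSpace ℝ (Fin 3)) :
    Fin n ⊕ Fin m → EuclideanSpace ℝ (Fin 3) :=
  Sum.elim x y

/-- The node set of the side of a node `u` of the disjoint union. -/
def WLside (n m : ℕ) : Fin n ⊕ Fin m → Type
  | Sum.inl _ => Fin n
  | Sum.inr _ => Fin m

/-- Inclusion of a side into the disjoint union. -/
def WLemb {n m : ℕ} : (u : Fin n ⊕ Fin m) → WLside n m u → Fin n ⊕ Fin m
  | Sum.inl _, w => Sum.inl w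
  | Sum.inr _, w => Sum.inr w

/-- The 1-WL-E (Vanilla DisGNN color refinement) relations `R_t` on the disjoint union
of two complete distance graphs, with trivial initial colors: `R_0` relates all pairs,
and `u R_{t+1} v` iff `u R_t v` and there is a bijection `σ` between the side of `u`
and the side of `v` preserving distances to `u` resp. `v` and the relation `R_t`. -/
def WLRel {n m : ℕ} (x : Fin n → EuclideanSpace ℝ (Fin 3))
    (y : Fin m → EuclideanSpace ℝ (Fin 3)) :
    ℕ → (Fin n ⊕ Fin m) → (Fin n ⊕ Fin m) → Prop
  | 0, _, _ => True
  | t + 1, u, v => WLRel x y t u v ∧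
      ∃ σ : WLside n m u ≃ WLside n m v, ∀ w : WLside n m u,
        dist (WLpos x y u) (WLpos x y (WLemb u w))
          = dist (WLpos x y v) (WLpos x y (WLemb v (σ w))) ∧
        WLRel x y t (WLemb u w) (WLemb v (σ w))

end OneWLE

/-- The left configuration `X_L(a,b)`: two opposite vertices of a regular octahedron
together with four coplanar cube vertices (all six points lie on the plane `x = y`). -/
noncomputable def XL (a b : ℝ) : Fin 6 → EuclideanSpace ℝ (Fin 3) :=
  ![!₂[0, 0, b], !₂[0, 0, -b], !₂[a, a, a], !₂[a, a, -a], !₂[-a, -a, a], !₂[-a, -a, -a]]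

/-- The right configuration `X_R(a,b)`: two opposite vertices of a regular octahedron
together with four non-coplanar cube vertices. -/
noncomputable def XR (a b : ℝ) : Fin 6 → EuclideanSpace ℝ (Fin 3) :=
  ![!₂[0, 0, b], !₂[0, 0, -b], !₂[a, a, a], !₂[-a, a, a], !₂[a, -a, -a], !₂[-a, -a, -a]]

/-- For all `a, b > 0`, 1-WL-E fails to distinguish `X_L(a,b)` and
`X_R(a,b)`: at every iteration `t` there is a bijection matching the nodes of
`X_L(a,b)` to nodes of `X_R(a,b)` with equal 1-WL-E colors. -/

private lemma matSix5 {α : Type*} (p0 p1 p2 p3 p4 p5 : α) :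
    ![p0,p1,p2,p3,p4,p5] 5 = p5 := rfl
private lemma matSixMk0 {α : Type*} (p0 p1 p2 p3 p4 p5 : α) (h : (0:ℕ) < 6) :
    ![p0,p1,p2,p3,p4,p5] ⟨0, h⟩ = p0 := rfl
private lemma matSixMk1 {α : Type*} (p0 p1 p2 p3 p4 p5 : α) (h : (1:ℕ) < 6) :
    ![p0,p1,p2,p3,p4,p5] ⟨1, h⟩ = p1 := rfl
private lemma matSixMk2 {α : Type*} (p0 p1 p2 p3 p4 p5 : α) (h : (2:ℕ) < 6) :
    ![p0,p1,p2,p3,p4,p5] ⟨2, h⟩ = p2 := rfl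
private lemma matSixMk3 {α : Type*} (p0 p1 p2 p3 p4 p5 : α) (h : (3:ℕ) < 6) :
    ![p0,p1,p2,p3,p4,p5] ⟨3, h⟩ = p3 := rfl
private lemma matSixMk4 {α : Type*} (p0 p1 p2 p3 p4 p5 : α) (h : (4:ℕ) < 6) :
    ![p0,p1,p2,p3,p4,p5] ⟨4, h⟩ = p4 := rfl
private lemma matSixMk5 {α : Type*} (p0 p1 p2 p3 p4 p5 : α) (h : (5:ℕ) < 6) :
    ![p0,p1,p2,p3,p4,p5] ⟨5, h⟩ = p5 := rfl

private lemma wl_step (a b : ℝ) (t : ℕ) (i j : Fin 6) (f g : Fin 6 → Fin 6)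
    (hfg : Function.LeftInverse g f) (hgf : Function.RightInverse g f)
    (hd : ∀ w : Fin 6, dist (XL a b i) (XL a b w) = dist (XR a b j) (XR a b (f w)))
    (hS : ∀ w : Fin 6, ((w:ℕ) < 2 ↔ ((f w : Fin 6):ℕ) < 2))
    (ih : ∀ i' j' : Fin 6, ((i':ℕ) < 2 ↔ (j':ℕ) < 2) →
      WLRel (XL a b) (XR a b) t (Sum.inl i') (Sum.inr j')) :
    ∃ σ : WLside 6 6 (Sum.inl i : Fin 6 ⊕ Fin 6) ≃ WLside 6 6 (Sum.inr j : Fin 6 ⊕ Fin 6),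
      ∀ w : WLside 6 6 (Sum.inl i : Fin 6 ⊕ Fin 6),
        dist (WLpos (XL a b) (XR a b) (Sum.inl i))
            (WLpos (XL a b) (XR a b) (WLemb (Sum.inl i) w))
          = dist (WLpos (XL a b) (XR a b) (Sum.inr j))
            (WLpos (XL a b) (XR a b) (WLemb (Sum.inr j) (σ w)))
        ∧ WLRel (XL a b) (XR a b) t (WLemb (Sum.inl i) w) (WLemb (Sum.inr j) (σ w)) :=
  ⟨⟨f, g, hfg, hgf⟩, fun w => ⟨hd w, ih w (f w) (hS w)⟩⟩

set_option maxHeartbeats 2000000 in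
private lemma wl_key (a b : ℝ) : ∀ (t : ℕ) (i j : Fin 6), ((i:ℕ) < 2 ↔ (j:ℕ) < 2) →
    WLRel (XL a b) (XR a b) t (Sum.inl i) (Sum.inr j) := by
  intro t
  induction t with
  | zero => exact fun i j _ => trivial
  | succ t ih =>
    intro i j h
    refine ⟨ih i j h, ?_⟩
    fin_cases i <;> fin_cases j
    · exact wl_step a b t _ _ ![0,1,2,4,3,5] ![0,1,2,4,3,5] (by decide) (by decide)
        (by intro w; fin_cases w <;>
          (simp [XL, XR, matSix5, matSixMk0, matSixMk1, matSixMk2, matSixMk3, matSixMk4,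
            matSixMk5, EuclideanSpace.dist_eq, Real.dist_eq, Fin.sum_univ_three, sq_abs] <;>
            ring_nf)) (by decide) ih
    · exact wl_step a b t _ _ ![1,0,4,2,5,3] ![1,0,3,5,2,4] (by decide) (by decide)
        (by intro w; fin_cases w <;>
          (simp [XL, XR, matSix5, matSixMk0, matSixMk1, matSixMk2, matSixMk3, matSixMk4,
            matSixMk5, EuclideanSpace.dist_eq, Real.dist_eq, Fin.sum_univ_three, sq_abs] <;>
            ring_nf)) (by decide) ih
    · exact absurd h (by decide)
    · exact absurd h (by decide)
    · exact absurd h (by decide)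
    · exact absurd h (by decide)
    · exact wl_step a b t _ _ ![1,0,4,2,5,3] ![1,0,3,5,2,4] (by decide) (by decide)
        (by intro w; fin_cases w <;>
          (simp [XL, XR, matSix5, matSixMk0, matSixMk1, matSixMk2, matSixMk3, matSixMk4,
            matSixMk5, EuclideanSpace.dist_eq, Real.dist_eq, Fin.sum_univ_three, sq_abs] <;>
            ring_nf)) (by decide) ih
    · exact wl_step a b t _ _ ![0,1,2,4,3,5] ![0,1,2,4,3,5] (by decide) (by decide)
        (by intro w; fin_cases w <;>
          (simp [XL, XR, matSix5, matSixMk0, matSixMk1, matSixMk2, matSixMk3, matSixMk4,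
            matSixMk5, EuclideanSpace.dist_eq, Real.dist_eq, Fin.sum_univ_three, sq_abs] <;>
            ring_nf)) (by decide) ih
    · exact absurd h (by decide)
    · exact absurd h (by decide)
    · exact absurd h (by decide)
    · exact absurd h (by decide)
    · exact absurd h (by decide)
    · exact absurd h (by decide)
    · exact wl_step a b t _ _ ![0,1,2,3,4,5] ![0,1,2,3,4,5] (by decide) (by decide)
        (by intro w; fin_cases w <;>
          (simp [XL, XR, matSix5, matSixMk0, matSixMk1, matSixMk2, matSixMk3, matSixMk4,
            matSixMk5, EuclideanSpace.dist_eq, Real.dist_eq, Fin.sum_univ_three, sq_abs] <;>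
            ring_nf)) (by decide) ih
    · exact wl_step a b t _ _ ![0,1,3,2,5,4] ![0,1,3,2,5,4] (by decide) (by decide)
        (by intro w; fin_cases w <;>
          (simp [XL, XR, matSix5, matSixMk0, matSixMk1, matSixMk2, matSixMk3, matSixMk4,
            matSixMk5, EuclideanSpace.dist_eq, Real.dist_eq, Fin.sum_univ_three, sq_abs] <;>
            ring_nf)) (by decide) ih
    · exact wl_step a b t _ _ ![1,0,4,5,2,3] ![1,0,4,5,2,3] (by decide) (by decide)
        (by intro w; fin_cases w <;>
          (simp [XL, XR, matSix5, matSixMk0, matSixMk1, matSixMk2, matSixMk3, matSixMk4,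
            matSixMk5, EuclideanSpace.dist_eq, Real.dist_eq, Fin.sum_univ_three, sq_abs] <;>
            ring_nf)) (by decide) ih
    · exact wl_step a b t _ _ ![1,0,5,4,3,2] ![1,0,5,4,3,2] (by decide) (by decide)
        (by intro w; fin_cases w <;>
          (simp [XL, XR, matSix5, matSixMk0, matSixMk1, matSixMk2, matSixMk3, matSixMk4,
            matSixMk5, EuclideanSpace.dist_eq, Real.dist_eq, Fin.sum_univ_three, sq_abs] <;>
            ring_nf)) (by decide) ih
    · exact absurd h (by decide)
    · exact absurd h (by decide)
    · exact wl_step a b t _ _ ![1,0,3,2,5,4] ![1,0,3,2,5,4] (by decide) (by decide)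
        (by intro w; fin_cases w <;>
          (simp [XL, XR, matSix5, matSixMk0, matSixMk1, matSixMk2, matSixMk3, matSixMk4,
            matSixMk5, EuclideanSpace.dist_eq, Real.dist_eq, Fin.sum_univ_three, sq_abs] <;>
            ring_nf)) (by decide) ih
    · exact wl_step a b t _ _ ![1,0,2,3,4,5] ![1,0,2,3,4,5] (by decide) (by decide)
        (by intro w; fin_cases w <;>
          (simp [XL, XR, matSix5, matSixMk0, matSixMk1, matSixMk2, matSixMk3, matSixMk4,
            matSixMk5, EuclideanSpace.dist_eq, Real.dist_eq, Fin.sum_univ_three, sq_abs] <;>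
            ring_nf)) (by decide) ih
    · exact wl_step a b t _ _ ![0,1,5,4,3,2] ![0,1,5,4,3,2] (by decide) (by decide)
        (by intro w; fin_cases w <;>
          (simp [XL, XR, matSix5, matSixMk0, matSixMk1, matSixMk2, matSixMk3, matSixMk4,
            matSixMk5, EuclideanSpace.dist_eq, Real.dist_eq, Fin.sum_univ_three, sq_abs] <;>
            ring_nf)) (by decide) ih
    · exact wl_step a b t _ _ ![0,1,4,5,2,3] ![0,1,4,5,2,3] (by decide) (by decide)
        (by intro w; fin_cases w <;>
          (simp [XL, XR, matSix5, matSixMk0, matSixMk1, matSixMk2, matSixMk3, matSixMk4,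
            matSixMk5, EuclideanSpace.dist_eq, Real.dist_eq, Fin.sum_univ_three, sq_abs] <;>
            ring_nf)) (by decide) ih
    · exact absurd h (by decide)
    · exact absurd h (by decide)
    · exact wl_step a b t _ _ ![0,1,4,5,2,3] ![0,1,4,5,2,3] (by decide) (by decide)
        (by intro w; fin_cases w <;>
          (simp [XL, XR, matSix5, matSixMk0, matSixMk1, matSixMk2, matSixMk3, matSixMk4,
            matSixMk5, EuclideanSpace.dist_eq, Real.dist_eq, Fin.sum_univ_three, sq_abs] <;>
            ring_nf)) (by decide) ih
    · exact wl_step a b t _ _ ![0,1,5,4,3,2] ![0,1,5,4,3,2] (by decide) (by decide)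
        (by intro w; fin_cases w <;>
          (simp [XL, XR, matSix5, matSixMk0, matSixMk1, matSixMk2, matSixMk3, matSixMk4,
            matSixMk5, EuclideanSpace.dist_eq, Real.dist_eq, Fin.sum_univ_three, sq_abs] <;>
            ring_nf)) (by decide) ih
    · exact wl_step a b t _ _ ![1,0,2,3,4,5] ![1,0,2,3,4,5] (by decide) (by decide)
        (by intro w; fin_cases w <;>
          (simp [XL, XR, matSix5, matSixMk0, matSixMk1, matSixMk2, matSixMk3, matSixMk4,
            matSixMk5, EuclideanSpace.dist_eq, Real.dist_eq, Fin.sum_univ_three, sq_abs] <;>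
            ring_nf)) (by decide) ih
    · exact wl_step a b t _ _ ![1,0,3,2,5,4] ![1,0,3,2,5,4] (by decide) (by decide)
        (by intro w; fin_cases w <;>
          (simp [XL, XR, matSix5, matSixMk0, matSixMk1, matSixMk2, matSixMk3, matSixMk4,
            matSixMk5, EuclideanSpace.dist_eq, Real.dist_eq, Fin.sum_univ_three, sq_abs] <;>
            ring_nf)) (by decide) ih
    · exact absurd h (by decide)
    · exact absurd h (by decide)
    · exact wl_step a b t _ _ ![1,0,5,4,3,2] ![1,0,5,4,3,2] (by decide) (by decide)
        (by intro w; fin_cases w <;>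
          (simp [XL, XR, matSix5, matSixMk0, matSixMk1, matSixMk2, matSixMk3, matSixMk4,
            matSixMk5, EuclideanSpace.dist_eq, Real.dist_eq, Fin.sum_univ_three, sq_abs] <;>
            ring_nf)) (by decide) ih
    · exact wl_step a b t _ _ ![1,0,4,5,2,3] ![1,0,4,5,2,3] (by decide) (by decide)
        (by intro w; fin_cases w <;>
          (simp [XL, XR, matSix5, matSixMk0, matSixMk1, matSixMk2, matSixMk3, matSixMk4,
            matSixMk5, EuclideanSpace.dist_eq, Real.dist_eq, Fin.sum_univ_three, sq_abs] <;>
            ring_nf)) (by decide) ih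
    · exact wl_step a b t _ _ ![0,1,3,2,5,4] ![0,1,3,2,5,4] (by decide) (by decide)
        (by intro w; fin_cases w <;>
          (simp [XL, XR, matSix5, matSixMk0, matSixMk1, matSixMk2, matSixMk3, matSixMk4,
            matSixMk5, EuclideanSpace.dist_eq, Real.dist_eq, Fin.sum_univ_three, sq_abs] <;>
            ring_nf)) (by decide) ih
    · exact wl_step a b t _ _ ![0,1,2,3,4,5] ![0,1,2,3,4,5] (by decide) (by decide)
        (by intro w; fin_cases w <;>
          (simp [XL, XR, matSix5, matSixMk0, matSixMk1, matSixMk2, matSixMk3, matSixMk4,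
            matSixMk5, EuclideanSpace.dist_eq, Real.dist_eq, Fin.sum_univ_three, sq_abs] <;>
            ring_nf)) (by decide) ih


theorem wl_fails_to_distinguish_XL_XR (a b : ℝ) (ha : 0 < a) (hb : 0 < b) :
    ∀ t : ℕ, ∃ π : Fin 6 ≃ Fin 6, ∀ i : Fin 6,
      WLRel (XL a b) (XR a b) t (Sum.inl i) (Sum.inr (π i)) := by
  intro t
  exact ⟨Equiv.refl _, fun i => wl_key a b t i i Iff.rfl⟩
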